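/- arXiv:1007.4543 — 2 statements merged into one kernel-verified Lean document; each statement's English description precedes it below -/
import Mathlib

section
/- For the weight structure w on the triangulated category T generated by a negative subcategory H (with H ⊆ T^{w=0}), the class T^{w≤0} is the envelope (smallest Karoubi-closed extension-stable subclass) of ∪_{i≥0} H[i], and T^{w≥0} is the envelope of ∪_{i≤0} H[i]. -/
open CategoryTheory Category Limits Pretriangulated

/-- `X` is a retract of `Y`. -/
def IsRetract {C : Type*} [Category C] (X Y : C) : Prop :=
  ∃ (i : X ⟶ Y) (r : Y ⟶ X), i ≫ r = 𝟙 X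

/-- A weight structure on a triangulated category `C`, given by the pair of classes
`le = C^{w≤0}` and `ge = C^{w≥0}` (Bondarko). -/
structure IsWeightStructure (C : Type*) [Category C] [HasZeroObject C] [HasShift C ℤ]
    [Preadditive C] [∀ n : ℤ, (shiftFunctor C n).Additive] [Pretriangulated C]
    (le ge : Set C) : Prop where
  le_retract : ∀ ⦃X Y : C⦄, Y ∈ le → IsRetract X Y → X ∈ le
  ge_retract : ∀ ⦃X Y : C⦄, Y ∈ ge → IsRetract X Y → X ∈ ge
  le_shift : ∀ ⦃X : C⦄, X ∈ le → X⟦(1 : ℤ)⟧ ∈ le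
  ge_shift : ∀ ⦃X : C⦄, X ∈ ge → X⟦(-1 : ℤ)⟧ ∈ ge
  orth : ∀ ⦃X Y : C⦄, X ∈ ge → Y ∈ le → ∀ f : X ⟶ Y⟦(1 : ℤ)⟧, f = 0
  decomp : ∀ M : C, ∃ (A B : C) (_ : A ∈ le) (_ : B ∈ ge)
    (f : M ⟶ A) (g : A ⟶ B) (h : B ⟶ M⟦(1 : ℤ)⟧), Triangle.mk f g h ∈ distTriang C
open ZeroObject

variable {C : Type*} [Category C] [HasZeroObject C] [HasShift C ℤ]
  [Preadditive C] [∀ n : ℤ, (shiftFunctor C n).Additive] [Pretriangulated C]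

/-- A class of objects is "thick-triangulated-closed" if it is closed under retracts,
shifts (in both directions) and cones of distinguished triangles. -/
def ThickTriangClosed (T : Set C) : Prop :=
  (∀ ⦃X Y : C⦄, Y ∈ T → IsRetract X Y → X ∈ T) ∧
  (∀ ⦃X : C⦄, X ∈ T → X⟦(1 : ℤ)⟧ ∈ T) ∧
  (∀ ⦃X : C⦄, X ∈ T → X⟦(-1 : ℤ)⟧ ∈ T) ∧
  (∀ Tr ∈ distTriang C, Tr.obj₁ ∈ T → Tr.obj₂ ∈ T → Tr.obj₃ ∈ T)

/-- The Karoubi-closure of the triangulated subcategory generated by `S`. -/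
def thickClosure (S : Set C) : Set C := ⋂₀ {T : Set C | S ⊆ T ∧ ThickTriangClosed T}

/-- A class of objects is Karoubi-closed and extension-stable. -/
def EnvClosed (T : Set C) : Prop :=
  (∀ ⦃X Y : C⦄, Y ∈ T → IsRetract X Y → X ∈ T) ∧
  (∀ Tr ∈ distTriang C, Tr.obj₁ ∈ T → Tr.obj₃ ∈ T → Tr.obj₂ ∈ T)

/-- The envelope of a class `D`: the smallest Karoubi-closed extension-stable class
containing `D`. -/
def envelope (D : Set C) : Set C := ⋂₀ {T : Set C | D ⊆ T ∧ EnvClosed T}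

set_option linter.unusedSectionVars false
set_option maxHeartbeats 1000000

section AuxWS

section RetractUtils

lemma isRetract_refl (X : C) : IsRetract X X := ⟨𝟙 X, 𝟙 X, by simp⟩

lemma isRetract_of_iso {X Y : C} (e : X ≅ Y) : IsRetract X Y := ⟨e.hom, e.inv, e.hom_inv_id⟩

lemma isRetract_trans {X Y Z : C} (h₁ : IsRetract X Y) (h₂ : IsRetract Y Z) : IsRetract X Z := by
  obtain ⟨i, r, hir⟩ := h₁
  obtain ⟨i', r', hir'⟩ := h₂
  refine ⟨i ≫ i', r' ≫ r, ?_⟩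
  rw [assoc, ← assoc i', hir', id_comp, hir]

lemma isRetract_shift {X Y : C} (n : ℤ) (h : IsRetract X Y) : IsRetract (X⟦n⟧) (Y⟦n⟧) := by
  obtain ⟨i, r, hir⟩ := h
  refine ⟨i⟦n⟧', r⟦n⟧', ?_⟩
  rw [← Functor.map_comp, hir]
  exact (shiftFunctor C n).map_id X

lemma isRetract_zero (Y : C) : IsRetract (0 : C) Y := ⟨0, 0, by simp⟩

end RetractUtils

section WSUtils

variable {le ge : Set C}

lemma shift_mem_le (w : IsWeightStructure C le ge) {X : C} (hX : X ∈ le) :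
    ∀ n : ℤ, 0 ≤ n → X⟦n⟧ ∈ le := by
  intro n hn
  refine Int.le_induction (motive := fun k _ => X⟦k⟧ ∈ le) ?_ ?_ n hn
  · exact w.le_retract hX (isRetract_of_iso ((shiftFunctorZero C ℤ).app X))
  · intro k _ ih
    exact w.le_retract (w.le_shift ih)
      (isRetract_of_iso ((shiftFunctorAdd' C k 1 (k + 1) rfl).app X))

lemma shift_mem_ge (w : IsWeightStructure C le ge) {X : C} (hX : X ∈ ge) :
    ∀ n : ℤ, n ≤ 0 → X⟦n⟧ ∈ ge := by
  intro n hn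
  refine Int.le_induction_down (motive := fun k _ => X⟦k⟧ ∈ ge) ?_ ?_ n hn
  · exact w.ge_retract hX (isRetract_of_iso ((shiftFunctorZero C ℤ).app X))
  · intro k _ ih
    exact w.ge_retract (w.ge_shift ih)
      (isRetract_of_iso ((shiftFunctorAdd' C k (-1) (k - 1) (by omega)).app X))

lemma orth_shift (w : IsWeightStructure C le ge) {X Y : C} (hX : X ∈ ge) (hY : Y ∈ le)
    {n : ℤ} (hn : 1 ≤ n) (f : X ⟶ Y⟦n⟧) : f = 0 := by
  have e := (shiftFunctorAdd' C (n - 1) 1 n (by omega)).app Y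
  have h0 : f ≫ e.hom = 0 := w.orth hX (shift_mem_le w hY (n - 1) (by omega)) _
  have : f = (f ≫ e.hom) ≫ e.inv := by simp
  rw [this, h0, zero_comp]

/-- Any map `B⟦-1⟧ ⟶ M` with `B ∈ ge`, `M ∈ le` vanishes. -/
lemma orth_negOne (w : IsWeightStructure C le ge) {B M : C} (hB : B ∈ ge) (hM : M ∈ le)
    (f : B⟦(-1 : ℤ)⟧ ⟶ M) : f = 0 := by
  have e := (shiftFunctorCompIsoId C (-1 : ℤ) (1 : ℤ) (by omega)).app B
  have h0 : e.inv ≫ f⟦(1 : ℤ)⟧' = 0 := w.orth hB hM _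
  have h1 : f⟦(1 : ℤ)⟧' = e.hom ≫ (e.inv ≫ f⟦(1 : ℤ)⟧') := by simp
  refine (shiftFunctor C (1 : ℤ)).map_injective ?_
  rw [Functor.map_zero]
  rw [h1, h0, comp_zero]

end WSUtils

section CharLemmas

variable {le ge : Set C}

/-- Orthogonality characterization of `le` (used for extension-stability). -/
lemma mem_le_of_orth (w : IsWeightStructure C le ge) {M : C}
    (hM : ∀ X ∈ ge, ∀ f : X ⟶ M⟦(1 : ℤ)⟧, f = 0) : M ∈ le := by
  obtain ⟨A, B, hA, hB, f, g, h, hd⟩ := w.decomp M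
  have hh : h = 0 := hM B hB h
  obtain ⟨r, hr⟩ := Triangle.yoneda_exact₂ _ (inv_rot_of_distTriang _ hd) (𝟙 M) (by
    dsimp [Triangle.invRotate]
    rw [hh]
    erw [Functor.map_zero]; simp; exact zero_comp)
  exact w.le_retract hA ⟨f, r, hr.symm⟩

/-- Orthogonality characterization of `ge`. -/
lemma mem_ge_of_orth (w : IsWeightStructure C le ge) {M : C}
    (hM : ∀ Y ∈ le, ∀ f : M ⟶ Y⟦(1 : ℤ)⟧, f = 0) : M ∈ ge := by
  obtain ⟨A, B, hA, hB, f, g, h, hd⟩ := w.decomp (M⟦(-1 : ℤ)⟧)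
  have e := (shiftFunctorCompIsoId C (-1 : ℤ) (1 : ℤ) (by omega)).app M
  have hf : f = 0 := by
    have h0 : e.inv ≫ f⟦(1 : ℤ)⟧' = 0 := hM A hA _
    have h1 : f⟦(1 : ℤ)⟧' = e.hom ≫ (e.inv ≫ f⟦(1 : ℤ)⟧') := by simp
    refine (shiftFunctor C (1 : ℤ)).map_injective ?_
    rw [Functor.map_zero, h1, h0, comp_zero]
  have hd2 := rot_of_distTriang _ (rot_of_distTriang _ hd)
  obtain ⟨i, hi⟩ := Triangle.coyoneda_exact₂ _ hd2 e.inv (by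
    show e.inv ≫ (-(f⟦(1 : ℤ)⟧')) = 0
    rw [hf, Functor.map_zero, neg_zero, comp_zero])
  have hi' : e.inv = i ≫ h := hi
  refine w.ge_retract hB ⟨i, h ≫ e.hom, ?_⟩
  erw [← assoc, ← hi']
  simp

lemma le_ext (w : IsWeightStructure C le ge) {T : Triangle C} (hT : T ∈ distTriang C)
    (h1 : T.obj₁ ∈ le) (h3 : T.obj₃ ∈ le) : T.obj₂ ∈ le := by
  refine mem_le_of_orth w ?_
  intro X hX φ
  have hd3 := rot_of_distTriang _ (rot_of_distTriang _ (rot_of_distTriang _ hT))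
  obtain ⟨ψ, hψ⟩ := Triangle.coyoneda_exact₂ _ hd3 φ (by
    show φ ≫ (-(T.mor₂⟦(1 : ℤ)⟧')) = 0
    rw [Preadditive.comp_neg, w.orth hX h3 (φ ≫ T.mor₂⟦(1 : ℤ)⟧'), neg_zero])
  have hψ0 : ψ = 0 := w.orth hX h1 ψ
  rw [hψ, hψ0, zero_comp]; rfl

lemma ge_ext (w : IsWeightStructure C le ge) {T : Triangle C} (hT : T ∈ distTriang C)
    (h1 : T.obj₁ ∈ ge) (h3 : T.obj₃ ∈ ge) : T.obj₂ ∈ ge := by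
  refine mem_ge_of_orth w ?_
  intro Y hY φ
  obtain ⟨ψ, hψ⟩ := Triangle.yoneda_exact₂ _ hT φ (w.orth h1 hY _)
  rw [hψ, w.orth h3 hY ψ, comp_zero]

end CharLemmas

section EnvelopeLemmas

lemma subset_envelope (D : Set C) : D ⊆ envelope D :=
  fun X hX => Set.mem_sInter.2 fun _ hT => hT.1 hX

lemma envelope_subset {D T : Set C} (h1 : D ⊆ T) (h2 : EnvClosed T) : envelope D ⊆ T :=
  fun _ hX => Set.mem_sInter.1 hX T ⟨h1, h2⟩

lemma envClosed_envelope (D : Set C) : EnvClosed (envelope D) := by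
  constructor
  · intro X Y hY hR
    exact Set.mem_sInter.2 fun T hT => hT.2.1 (Set.mem_sInter.1 hY T hT) hR
  · intro Tr hTr h1 h3
    exact Set.mem_sInter.2 fun T hT =>
      hT.2.2 Tr hTr (Set.mem_sInter.1 h1 T hT) (Set.mem_sInter.1 h3 T hT)

end EnvelopeLemmas

section ChaseHelpers

variable {le ge : Set C}

/-- Surjectivity of `Hom(A'⟦1⟧, Y⟦1⟧) → Hom(N⟦1⟧, Y⟦1⟧)` for a weight decomposition. -/
lemma decomp_hom_surj (w : IsWeightStructure C le ge) {Y N A' B' : C} (hY : Y ∈ le)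
    (hB' : B' ∈ ge) {f : N ⟶ A'} {g : A' ⟶ B'} {h : B' ⟶ N⟦(1 : ℤ)⟧}
    (hd : Triangle.mk f g h ∈ distTriang C) (ξ : N⟦(1 : ℤ)⟧ ⟶ Y⟦(1 : ℤ)⟧) :
    ∃ ρ : A'⟦(1 : ℤ)⟧ ⟶ Y⟦(1 : ℤ)⟧, ξ = f⟦(1 : ℤ)⟧' ≫ ρ := by
  have hd2 := rot_of_distTriang _ (rot_of_distTriang _ hd)
  obtain ⟨ρ', hρ'⟩ := Triangle.yoneda_exact₂ _ hd2 ξ (w.orth hB' hY _)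
  refine ⟨-ρ', ?_⟩
  rw [hρ']
  show (-(f⟦(1 : ℤ)⟧')) ≫ ρ' = f⟦(1 : ℤ)⟧' ≫ (-ρ')
  erw [Preadditive.neg_comp, Preadditive.comp_neg]

/-- Injectivity of `Hom(A', Y⟦1⟧) → Hom(N, Y⟦1⟧)` for a weight decomposition. -/
lemma decomp_hom_inj (w : IsWeightStructure C le ge) {Y N A' B' : C} (hY : Y ∈ le)
    (hB' : B' ∈ ge) {f : N ⟶ A'} {g : A' ⟶ B'} {h : B' ⟶ N⟦(1 : ℤ)⟧}
    (hd : Triangle.mk f g h ∈ distTriang C) (α : A' ⟶ Y⟦(1 : ℤ)⟧) (hα : f ≫ α = 0) :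
    α = 0 := by
  obtain ⟨β, hβ⟩ := Triangle.yoneda_exact₂ _ hd α hα
  erw [hβ, w.orth hB' hY β, comp_zero]; rfl

/-- Surjectivity of `Hom(Z, P⟦1⟧) → Hom(Z, N⟦1⟧)` for a fiber triangle with `A ∈ le`. -/
lemma fiber_hom_surj (w : IsWeightStructure C le ge) {Z : C} (hZ : Z ∈ ge)
    {P N A : C} {k : P ⟶ N} {f : N ⟶ A} {g : A ⟶ P⟦(1 : ℤ)⟧}
    (hd : Triangle.mk k f g ∈ distTriang C) (hA : A ∈ le) (ψ : Z ⟶ N⟦(1 : ℤ)⟧) :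
    ∃ χ : Z ⟶ P⟦(1 : ℤ)⟧, ψ = χ ≫ k⟦(1 : ℤ)⟧' := by
  have hd3 := rot_of_distTriang _ (rot_of_distTriang _ (rot_of_distTriang _ hd))
  obtain ⟨χ', hχ'⟩ := Triangle.coyoneda_exact₂ _ hd3 ψ (by
    show ψ ≫ (-(f⟦(1 : ℤ)⟧')) = 0
    rw [Preadditive.comp_neg, w.orth hZ hA (ψ ≫ f⟦(1 : ℤ)⟧'), neg_zero])
  refine ⟨-χ', ?_⟩
  rw [hχ']
  show χ' ≫ (-(k⟦(1 : ℤ)⟧')) = (-χ') ≫ k⟦(1 : ℤ)⟧'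
  erw [Preadditive.neg_comp, Preadditive.comp_neg]; rfl

/-- Injectivity of `Hom(Z, P⟦1⟧⟦1⟧) → Hom(Z, N⟦1⟧⟦1⟧)` for a fiber triangle with `A ∈ le`. -/
lemma fiber_hom_inj (w : IsWeightStructure C le ge) {Z : C} (hZ : Z ∈ ge)
    {P N A : C} {k : P ⟶ N} {f : N ⟶ A} {g : A ⟶ P⟦(1 : ℤ)⟧}
    (hd : Triangle.mk k f g ∈ distTriang C) (hA : A ∈ le)
    (χ : Z ⟶ P⟦(1 : ℤ)⟧⟦(1 : ℤ)⟧) (hχ : χ ≫ (k⟦(1 : ℤ)⟧')⟦(1 : ℤ)⟧' = 0) :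
    χ = 0 := by
  have hd5 := rot_of_distTriang _ (rot_of_distTriang _ (rot_of_distTriang _
    (rot_of_distTriang _ (rot_of_distTriang _ hd))))
  obtain ⟨ξ, hξ⟩ := Triangle.coyoneda_exact₂ _ hd5 χ (by
    show χ ≫ (-((-(k⟦(1 : ℤ)⟧'))⟦(1 : ℤ)⟧')) = 0
    rw [Functor.map_neg, neg_neg]
    exact hχ)
  have hξ0 : ξ = 0 := w.orth hZ hA ξ
  rw [hξ, hξ0, zero_comp]; rfl

end ChaseHelpers

section ExtLemmas

variable (le ge E : Set C)

/-- A weight decomposition with the `le`-piece constrained to `E`. -/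
def PosDecomp (N : C) : Prop :=
  ∃ (A B : C) (f : N ⟶ A) (g : A ⟶ B) (h : B ⟶ N⟦(1 : ℤ)⟧),
    A ∈ E ∧ A ∈ le ∧ B ∈ ge ∧ Triangle.mk f g h ∈ distTriang C

/-- A weight decomposition with the `ge`-piece constrained to `E`. -/
def NegDecomp (N : C) : Prop :=
  ∃ (A B : C) (f : N ⟶ A) (g : A ⟶ B) (h : B ⟶ N⟦(1 : ℤ)⟧),
    A ∈ le ∧ B ∈ E ∧ B ∈ ge ∧ Triangle.mk f g h ∈ distTriang C

/-- Fiber-form of `NegDecomp`. -/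
def FibDecomp (N : C) : Prop :=
  ∃ (P A : C) (k : P ⟶ N) (f : N ⟶ A) (g : A ⟶ P⟦(1 : ℤ)⟧),
    P⟦(1 : ℤ)⟧ ∈ E ∧ P⟦(1 : ℤ)⟧ ∈ ge ∧ A ∈ le ∧ Triangle.mk k f g ∈ distTriang C

variable {le ge E}

lemma dist_of_iso_obj₁ {N N' A B : C} (e : N ≅ N') {f : N' ⟶ A} {g : A ⟶ B}
    {h : B ⟶ N'⟦(1 : ℤ)⟧} (hd : Triangle.mk f g h ∈ distTriang C) :
    Triangle.mk (e.hom ≫ f) g (h ≫ e.inv⟦(1 : ℤ)⟧') ∈ distTriang C := by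
  refine isomorphic_distinguished _ hd _ ?_
  refine Triangle.isoMk _ _ e (Iso.refl _) (Iso.refl _) (by exact comp_id _) (by exact (comp_id _).trans (id_comp _).symm) ?_
  dsimp
  change (h ≫ e.inv⟦(1 : ℤ)⟧') ≫ e.hom⟦(1 : ℤ)⟧' = 𝟙 B ≫ h
  rw [assoc, ← Functor.map_comp, e.inv_hom_id, CategoryTheory.Functor.map_id, comp_id, id_comp]

lemma posDecomp_of_iso {N N' : C} (e : N ≅ N') (hp : PosDecomp le ge E N') :
    PosDecomp le ge E N := by
  obtain ⟨A, B, f, g, h, h1, h2, h3, hd⟩ := hp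
  exact ⟨A, B, e.hom ≫ f, g, h ≫ e.inv⟦(1 : ℤ)⟧', h1, h2, h3, dist_of_iso_obj₁ e hd⟩

lemma negDecomp_of_iso {N N' : C} (e : N ≅ N') (hp : NegDecomp le ge E N') :
    NegDecomp le ge E N := by
  obtain ⟨A, B, f, g, h, h1, h2, h3, hd⟩ := hp
  exact ⟨A, B, e.hom ≫ f, g, h ≫ e.inv⟦(1 : ℤ)⟧', h1, h2, h3, dist_of_iso_obj₁ e hd⟩

lemma negDecomp_fib (w : IsWeightStructure C le ge)
    (hEr : ∀ ⦃P Q : C⦄, Q ∈ E → IsRetract P Q → P ∈ E) {N : C}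
    (hp : NegDecomp le ge E N) : FibDecomp le ge E N := by
  obtain ⟨A, B, f, g, h, hAle, hBE, hBge, hd⟩ := hp
  have e := (shiftFunctorCompIsoId C (-1 : ℤ) (1 : ℤ) (by omega)).app B
  refine ⟨B⟦(-1 : ℤ)⟧, A, (Triangle.mk f g h).invRotate.mor₁, f,
    (Triangle.mk f g h).invRotate.mor₃, ?_, ?_, hAle, inv_rot_of_distTriang _ hd⟩
  · exact hEr hBE (isRetract_of_iso e)
  · exact w.ge_retract hBge (isRetract_of_iso e)

/-- Maps `P ⟶ A⟦1⟧` vanish when `P⟦1⟧ ∈ ge` and `A ∈ le`. -/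
lemma orth_unshift (w : IsWeightStructure C le ge) {P A : C} (hP : P⟦(1 : ℤ)⟧ ∈ ge)
    (hA : A ∈ le) (f : P ⟶ A⟦(1 : ℤ)⟧) : f = 0 := by
  refine (shiftFunctor C (1 : ℤ)).map_injective ?_
  rw [Functor.map_zero]
  exact w.orth hP (w.le_shift hA) (f⟦(1 : ℤ)⟧')

/-- The one-sided extension lemma for `PosDecomp` (octahedron-free). -/
lemma extPos (w : IsWeightStructure C le ge)
    (hEe : ∀ Tr ∈ distTriang C, Tr.obj₁ ∈ E → Tr.obj₃ ∈ E → Tr.obj₂ ∈ E)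
    {T : Triangle C} (hT : T ∈ distTriang C)
    (hX : PosDecomp le ge E T.obj₁) (hW : PosDecomp le ge E T.obj₃) :
    PosDecomp le ge E T.obj₂ := by
  obtain ⟨A₁, B₁, f₁, g₁, h₁, hA₁E, hA₁le, hB₁ge, hdX⟩ := hX
  obtain ⟨A₂, B₂, f₂, g₂, h₂, hA₂E, hA₂le, hB₂ge, hdW⟩ := hW
  obtain ⟨d', hd''⟩ : ∃ d' : A₂ ⟶ A₁⟦(1 : ℤ)⟧, T.mor₃ ≫ f₁⟦(1 : ℤ)⟧' = f₂ ≫ d' :=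
    Triangle.yoneda_exact₂ _ (inv_rot_of_distTriang _ hdW) (T.mor₃ ≫ f₁⟦(1 : ℤ)⟧')
      (orth_negOne w hB₂ge (w.le_shift hA₁le) _)
  obtain ⟨A, j, p, hdA⟩ := distinguished_cocone_triangle₂ d'
  have hAle : A ∈ le := le_ext w hdA hA₁le hA₂le
  have hAE : A ∈ E := hEe _ hdA hA₁E hA₂E
  obtain ⟨μ, hμ₁0, hμ₂0⟩ : ∃ μ : T.obj₂ ⟶ A, T.mor₁ ≫ μ = f₁ ≫ j ∧ T.mor₂ ≫ f₂ = μ ≫ p :=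
    complete_distinguished_triangle_morphism₂ T (Triangle.mk j p d')
    hT hdA f₁ f₂ hd''
  have hμ₁ : T.mor₁ ≫ μ = f₁ ≫ j := hμ₁0
  have hμ₂ : T.mor₂ ≫ f₂ = μ ≫ p := hμ₂0
  obtain ⟨B, gB, hB, hdB⟩ := distinguished_cocone_triangle μ
  refine ⟨A, B, μ, gB, hB, hAE, hAle, ?_, hdB⟩
  refine mem_ge_of_orth w ?_
  intro Y hY φ
  have hpd : p ≫ d' = 0 := comp_distTriang_mor_zero₂₃ _ hdA
  have P2 : ∀ α : A ⟶ Y⟦(1 : ℤ)⟧, μ ≫ α = 0 → α = 0 := by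
    intro α hα
    have h1 : j ≫ α = 0 := by
      refine decomp_hom_inj w hY hB₁ge hdX (j ≫ α) ?_
      rw [← assoc, ← hμ₁, assoc, hα, comp_zero]
    obtain ⟨β, hβ'⟩ : ∃ β : A₂ ⟶ Y⟦(1 : ℤ)⟧, α = p ≫ β :=
      Triangle.yoneda_exact₂ _ hdA α h1
    have h2 : T.mor₂ ≫ (f₂ ≫ β) = 0 := by
      rw [← assoc, hμ₂, assoc, ← hβ', hα]
    obtain ⟨γ, hγ'⟩ : ∃ γ : T.obj₁⟦(1 : ℤ)⟧ ⟶ Y⟦(1 : ℤ)⟧, f₂ ≫ β = T.mor₃ ≫ γ :=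
      Triangle.yoneda_exact₂ _ (rot_of_distTriang _ hT) (f₂ ≫ β) h2
    obtain ⟨ρ, hρ⟩ := decomp_hom_surj w hY hB₁ge hdX γ
    have h3 : f₂ ≫ (β - d' ≫ ρ) = 0 := by
      rw [Preadditive.comp_sub, hγ', ← assoc, ← hd'', assoc, ← hρ, sub_self]
    obtain ⟨ε, hε⟩ : ∃ ε : B₂ ⟶ Y⟦(1 : ℤ)⟧, β - d' ≫ ρ = g₂ ≫ ε :=
      Triangle.yoneda_exact₂ _ hdW (β - d' ≫ ρ) h3
    have hβ'' : β = d' ≫ ρ := by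
      have hε0 : ε = 0 := w.orth hB₂ge hY ε
      rw [hε0, comp_zero] at hε
      exact sub_eq_zero.1 hε
    rw [hβ', hβ'', ← assoc, hpd, zero_comp]
  have P1 : ∀ ψ : T.obj₂⟦(1 : ℤ)⟧ ⟶ Y⟦(1 : ℤ)⟧,
      ∃ σ : A⟦(1 : ℤ)⟧ ⟶ Y⟦(1 : ℤ)⟧, ψ = μ⟦(1 : ℤ)⟧' ≫ σ := by
    intro ψ
    obtain ⟨ρ₁, hρ₁⟩ := decomp_hom_surj w hY hB₁ge hdX (T.mor₁⟦(1 : ℤ)⟧' ≫ ψ)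
    have hσ₀ : d' ≫ ρ₁ = 0 := by
      refine decomp_hom_inj w hY hB₂ge hdW _ ?_
      rw [← assoc, ← hd'', assoc, ← hρ₁, ← assoc, comp_distTriang_mor_zero₃₁ _ hT, zero_comp]
    have hdA2 := rot_of_distTriang _ (rot_of_distTriang _ hdA)
    obtain ⟨σ₁, hσ₁'⟩ : ∃ σ₁ : A⟦(1 : ℤ)⟧ ⟶ Y⟦(1 : ℤ)⟧, ρ₁ = (-(j⟦(1 : ℤ)⟧')) ≫ σ₁ :=
      Triangle.yoneda_exact₂ _ hdA2 ρ₁ (by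
        show d' ≫ ρ₁ = 0
        exact hσ₀)
    have hρ₁n : ρ₁ = -(j⟦(1 : ℤ)⟧' ≫ σ₁) := by rw [hσ₁', Preadditive.neg_comp]
    have h5 : T.mor₁⟦(1 : ℤ)⟧' ≫ (ψ + μ⟦(1 : ℤ)⟧' ≫ σ₁) = 0 := by
      have e1 : f₁⟦(1 : ℤ)⟧' ≫ (j⟦(1 : ℤ)⟧' ≫ σ₁)
          = T.mor₁⟦(1 : ℤ)⟧' ≫ (μ⟦(1 : ℤ)⟧' ≫ σ₁) := by
        rw [← assoc, ← assoc, ← Functor.map_comp, ← Functor.map_comp, hμ₁]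
      rw [Preadditive.comp_add, hρ₁, hρ₁n, Preadditive.comp_neg, e1, neg_add_cancel]
    have hdT3 := rot_of_distTriang _ (rot_of_distTriang _ (rot_of_distTriang _ hT))
    obtain ⟨τ, hτ'⟩ : ∃ τ : T.obj₃⟦(1 : ℤ)⟧ ⟶ Y⟦(1 : ℤ)⟧,
        ψ + μ⟦(1 : ℤ)⟧' ≫ σ₁ = (-(T.mor₂⟦(1 : ℤ)⟧')) ≫ τ :=
      Triangle.yoneda_exact₂ _ hdT3 (ψ + μ⟦(1 : ℤ)⟧' ≫ σ₁) (by
        show (-(T.mor₁⟦(1 : ℤ)⟧')) ≫ (ψ + μ⟦(1 : ℤ)⟧' ≫ σ₁) = 0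
        rw [Preadditive.neg_comp, h5, neg_zero])
    obtain ⟨ρ₂, hρ₂⟩ := decomp_hom_surj w hY hB₂ge hdW τ
    refine ⟨-(p⟦(1 : ℤ)⟧' ≫ ρ₂) - σ₁, ?_⟩
    have e2 : T.mor₂⟦(1 : ℤ)⟧' ≫ (f₂⟦(1 : ℤ)⟧' ≫ ρ₂)
        = μ⟦(1 : ℤ)⟧' ≫ (p⟦(1 : ℤ)⟧' ≫ ρ₂) := by
      rw [← assoc, ← assoc, ← Functor.map_comp, ← Functor.map_comp, hμ₂]
    have hb : (-(T.mor₂⟦(1 : ℤ)⟧')) ≫ τ = -(μ⟦(1 : ℤ)⟧' ≫ (p⟦(1 : ℤ)⟧' ≫ ρ₂)) := by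
      rw [hρ₂, Preadditive.neg_comp, e2]
    have hψeq : ψ = -(μ⟦(1 : ℤ)⟧' ≫ (p⟦(1 : ℤ)⟧' ≫ ρ₂)) - μ⟦(1 : ℤ)⟧' ≫ σ₁ := by
      rw [← hb]
      exact eq_sub_of_add_eq hτ'
    rw [hψeq, Preadditive.comp_sub, Preadditive.comp_neg]
  have hmg : μ ≫ gB = 0 := comp_distTriang_mor_zero₁₂ _ hdB
  have hgφ : gB ≫ φ = 0 := P2 (gB ≫ φ) (by rw [← assoc, hmg, zero_comp])
  obtain ⟨ψ, hψ'⟩ : ∃ ψ : T.obj₂⟦(1 : ℤ)⟧ ⟶ Y⟦(1 : ℤ)⟧, φ = hB ≫ ψ :=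
    Triangle.yoneda_exact₂ _ (rot_of_distTriang _ hdB) φ hgφ
  obtain ⟨σ, hσ⟩ := P1 ψ
  have hz : hB ≫ μ⟦(1 : ℤ)⟧' = 0 := comp_distTriang_mor_zero₃₁ _ hdB
  rw [hψ', hσ, ← assoc, hz, zero_comp]

/-- The one-sided extension lemma for `NegDecomp` via `FibDecomp` (octahedron-free). -/
lemma extNegFib (w : IsWeightStructure C le ge)
    (hEe : ∀ Tr ∈ distTriang C, Tr.obj₁ ∈ E → Tr.obj₃ ∈ E → Tr.obj₂ ∈ E)
    {T : Triangle C} (hT : T ∈ distTriang C)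
    (hX : FibDecomp le ge E T.obj₁) (hW : FibDecomp le ge E T.obj₃) :
    NegDecomp le ge E T.obj₂ := by
  obtain ⟨P₁, A₁, k₁, f₁, g₁, hP₁E, hP₁ge, hA₁le, hdX⟩ := hX
  obtain ⟨P₂, A₂, k₂, f₂, g₂, hP₂E, hP₂ge, hA₂le, hdW⟩ := hW
  have hd3X := rot_of_distTriang _ (rot_of_distTriang _ (rot_of_distTriang _ hdX))
  obtain ⟨d₀, hd₀'⟩ : ∃ d₀ : P₂ ⟶ P₁⟦(1 : ℤ)⟧,
      k₂ ≫ T.mor₃ = d₀ ≫ (-(k₁⟦(1 : ℤ)⟧')) :=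
    Triangle.coyoneda_exact₂ _ hd3X (k₂ ≫ T.mor₃) (by
      show (k₂ ≫ T.mor₃) ≫ (-(f₁⟦(1 : ℤ)⟧')) = 0
      rw [Preadditive.comp_neg, orth_unshift w hP₂ge hA₁le
        ((k₂ ≫ T.mor₃) ≫ f₁⟦(1 : ℤ)⟧'), neg_zero])
  have hdt : (-d₀) ≫ k₁⟦(1 : ℤ)⟧' = k₂ ≫ T.mor₃ := by
    rw [hd₀', Preadditive.neg_comp, Preadditive.comp_neg]
  obtain ⟨B, jB, pB, hdB⟩ := distinguished_cocone_triangle₂ (-d₀)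
  obtain ⟨γ, hγ₁0, hγ₂0⟩ : ∃ γ : B ⟶ T.obj₂, jB ≫ γ = k₁ ≫ T.mor₁ ∧ pB ≫ k₂ = γ ≫ T.mor₂ :=
    complete_distinguished_triangle_morphism₂
    (Triangle.mk jB pB (-d₀)) T hdB hT k₁ k₂ hdt
  have hγ₁ : jB ≫ γ = k₁ ≫ T.mor₁ := hγ₁0
  have hγ₂ : pB ≫ k₂ = γ ≫ T.mor₂ := hγ₂0
  obtain ⟨A, q, r, hdC⟩ := distinguished_cocone_triangle γ
  have hdB3 := rot_of_distTriang _ (rot_of_distTriang _ (rot_of_distTriang _ hdB))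
  have hBE : B⟦(1 : ℤ)⟧ ∈ E := hEe _ hdB3 hP₁E hP₂E
  have hBge : B⟦(1 : ℤ)⟧ ∈ ge := ge_ext w hdB3 hP₁ge hP₂ge
  have hjd : (-d₀) ≫ jB⟦(1 : ℤ)⟧' = 0 := comp_distTriang_mor_zero₃₁ _ hdB
  have hrg : r ≫ γ⟦(1 : ℤ)⟧' = 0 := comp_distTriang_mor_zero₃₁ _ hdC
  have hgq : γ ≫ q = 0 := comp_distTriang_mor_zero₁₂ _ hdC
  have hAle : A ∈ le := by
    refine mem_le_of_orth w ?_
    intro Z hZ φ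
    have Q1 : ∀ χ : Z ⟶ T.obj₂⟦(1 : ℤ)⟧, ∃ ρ : Z ⟶ B⟦(1 : ℤ)⟧, χ = ρ ≫ γ⟦(1 : ℤ)⟧' := by
      intro χ
      obtain ⟨ρ₂, hρ₂⟩ := fiber_hom_surj w hZ hdW hA₂le (χ ≫ T.mor₂⟦(1 : ℤ)⟧')
      have hσ : ρ₂ ≫ (-d₀)⟦(1 : ℤ)⟧' = 0 := by
        refine fiber_hom_inj w hZ hdX hA₁le _ ?_
        rw [assoc, ← Functor.map_comp, hdt, Functor.map_comp, ← assoc, ← hρ₂, assoc,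
          ← Functor.map_comp, comp_distTriang_mor_zero₂₃ _ hT, Functor.map_zero, comp_zero]
      have hdB4 := rot_of_distTriang _ (rot_of_distTriang _ (rot_of_distTriang _
        (rot_of_distTriang _ hdB)))
      obtain ⟨τ, hτ'⟩ : ∃ τ : Z ⟶ B⟦(1 : ℤ)⟧, ρ₂ = τ ≫ (-(pB⟦(1 : ℤ)⟧')) :=
        Triangle.coyoneda_exact₂ _ hdB4 ρ₂ (by
          show ρ₂ ≫ (-((-d₀)⟦(1 : ℤ)⟧')) = 0
          rw [Preadditive.comp_neg, hσ, neg_zero])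
      have e1 : (τ ≫ γ⟦(1 : ℤ)⟧') ≫ T.mor₂⟦(1 : ℤ)⟧'
          = τ ≫ (pB⟦(1 : ℤ)⟧' ≫ k₂⟦(1 : ℤ)⟧') := by
        rw [assoc, ← Functor.map_comp, ← hγ₂, Functor.map_comp]
      have h4 : (χ + τ ≫ γ⟦(1 : ℤ)⟧') ≫ T.mor₂⟦(1 : ℤ)⟧' = 0 := by
        rw [Preadditive.add_comp, hρ₂, hτ', e1, Preadditive.comp_neg,
          Preadditive.neg_comp, assoc, neg_add_cancel]
      have hdT3 := rot_of_distTriang _ (rot_of_distTriang _ (rot_of_distTriang _ hT))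
      obtain ⟨ξ, hξ'⟩ : ∃ ξ : Z ⟶ T.obj₁⟦(1 : ℤ)⟧,
          χ + τ ≫ γ⟦(1 : ℤ)⟧' = ξ ≫ (-(T.mor₁⟦(1 : ℤ)⟧')) :=
        Triangle.coyoneda_exact₂ _ hdT3 (χ + τ ≫ γ⟦(1 : ℤ)⟧') (by
          show (χ + τ ≫ γ⟦(1 : ℤ)⟧') ≫ (-(T.mor₂⟦(1 : ℤ)⟧')) = 0
          rw [Preadditive.comp_neg, h4, neg_zero])
      obtain ⟨ρ₁, hρ₁⟩ := fiber_hom_surj w hZ hdX hA₁le ξ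
      refine ⟨-(ρ₁ ≫ jB⟦(1 : ℤ)⟧') - τ, ?_⟩
      have e2 : ξ ≫ T.mor₁⟦(1 : ℤ)⟧' = (ρ₁ ≫ jB⟦(1 : ℤ)⟧') ≫ γ⟦(1 : ℤ)⟧' := by
        rw [hρ₁, assoc, ← Functor.map_comp, ← hγ₁, Functor.map_comp, ← assoc]
      have hχeq : χ = -((ρ₁ ≫ jB⟦(1 : ℤ)⟧') ≫ γ⟦(1 : ℤ)⟧') - τ ≫ γ⟦(1 : ℤ)⟧' := by
        have h := eq_sub_of_add_eq hξ'
        rw [Preadditive.comp_neg, e2] at h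
        exact h
      rw [hχeq, Preadditive.sub_comp, Preadditive.neg_comp]
    have Q2 : ∀ α : Z ⟶ B⟦(1 : ℤ)⟧⟦(1 : ℤ)⟧,
        α ≫ (γ⟦(1 : ℤ)⟧')⟦(1 : ℤ)⟧' = 0 → α = 0 := by
      intro α hα
      have hαp : α ≫ (pB⟦(1 : ℤ)⟧')⟦(1 : ℤ)⟧' = 0 := by
        refine fiber_hom_inj w hZ hdW hA₂le _ ?_
        rw [assoc, ← Functor.map_comp, ← Functor.map_comp, hγ₂, Functor.map_comp,
          Functor.map_comp, ← assoc, hα, zero_comp]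
      have hdB6 := rot_of_distTriang _ (rot_of_distTriang _ (rot_of_distTriang _ hdB3))
      obtain ⟨β, hβ'⟩ : ∃ β : Z ⟶ P₁⟦(1 : ℤ)⟧⟦(1 : ℤ)⟧,
          α = β ≫ (-((-(jB⟦(1 : ℤ)⟧'))⟦(1 : ℤ)⟧')) :=
        Triangle.coyoneda_exact₂ _ hdB6 α (by
          show α ≫ (-((-(pB⟦(1 : ℤ)⟧'))⟦(1 : ℤ)⟧')) = 0
          rw [Functor.map_neg, neg_neg]
          exact hαp)
      have hβ'' : α = β ≫ (jB⟦(1 : ℤ)⟧')⟦(1 : ℤ)⟧' := by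
        rw [hβ', Functor.map_neg, neg_neg]
      have h3 : (β ≫ (k₁⟦(1 : ℤ)⟧')⟦(1 : ℤ)⟧') ≫ (T.mor₁⟦(1 : ℤ)⟧')⟦(1 : ℤ)⟧' = 0 := by
        rw [assoc, ← Functor.map_comp, ← Functor.map_comp, ← hγ₁, Functor.map_comp,
          Functor.map_comp, ← assoc, ← hβ'', hα]
      have hdT5 := rot_of_distTriang _ (rot_of_distTriang _ (rot_of_distTriang _
        (rot_of_distTriang _ (rot_of_distTriang _ hT))))
      obtain ⟨ζ, hζ'⟩ : ∃ ζ : Z ⟶ T.obj₃⟦(1 : ℤ)⟧,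
          β ≫ (k₁⟦(1 : ℤ)⟧')⟦(1 : ℤ)⟧' = ζ ≫ (-(T.mor₃⟦(1 : ℤ)⟧')) :=
        Triangle.coyoneda_exact₂ _ hdT5 (β ≫ (k₁⟦(1 : ℤ)⟧')⟦(1 : ℤ)⟧') (by
          show (β ≫ (k₁⟦(1 : ℤ)⟧')⟦(1 : ℤ)⟧') ≫ (-((-(T.mor₁⟦(1 : ℤ)⟧'))⟦(1 : ℤ)⟧')) = 0
          rw [Functor.map_neg, neg_neg]
          exact h3)
      obtain ⟨ρ, hρ⟩ := fiber_hom_surj w hZ hdW hA₂le ζ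
      have e5 : ζ ≫ T.mor₃⟦(1 : ℤ)⟧'
          = (ρ ≫ (-d₀)⟦(1 : ℤ)⟧') ≫ (k₁⟦(1 : ℤ)⟧')⟦(1 : ℤ)⟧' := by
        rw [hρ, assoc, assoc, ← Functor.map_comp, ← Functor.map_comp, hdt]
      have h6 : (β + ρ ≫ (-d₀)⟦(1 : ℤ)⟧') ≫ (k₁⟦(1 : ℤ)⟧')⟦(1 : ℤ)⟧' = 0 := by
        rw [Preadditive.add_comp, hζ', Preadditive.comp_neg, e5, neg_add_cancel]
      have hβ0 : β = -(ρ ≫ (-d₀)⟦(1 : ℤ)⟧') :=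
        eq_neg_of_add_eq_zero_left (fiber_hom_inj w hZ hdX hA₁le _ h6)
      rw [hβ'', hβ0, Preadditive.neg_comp, assoc, ← Functor.map_comp, hjd,
        Functor.map_zero, comp_zero, neg_zero]
    have hω : φ ≫ r⟦(1 : ℤ)⟧' = 0 := by
      refine Q2 _ ?_
      rw [assoc, ← Functor.map_comp, hrg, Functor.map_zero, comp_zero]
    have hdC4 := rot_of_distTriang _ (rot_of_distTriang _ (rot_of_distTriang _
      (rot_of_distTriang _ hdC)))
    obtain ⟨χ, hχ'⟩ : ∃ χ : Z ⟶ T.obj₂⟦(1 : ℤ)⟧, φ = χ ≫ (-(q⟦(1 : ℤ)⟧')) :=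
      Triangle.coyoneda_exact₂ _ hdC4 φ (by
        show φ ≫ (-(r⟦(1 : ℤ)⟧')) = 0
        rw [Preadditive.comp_neg, hω, neg_zero])
    obtain ⟨ρ, hρ⟩ := Q1 χ
    rw [hχ', hρ, assoc, Preadditive.comp_neg, ← Functor.map_comp, hgq,
      Functor.map_zero, neg_zero, comp_zero]
  exact ⟨A, B⟦(1 : ℤ)⟧, q, r, -(γ⟦(1 : ℤ)⟧'), hAle, hBE, hBge, rot_of_distTriang _ hdC⟩

end ExtLemmas

section Generation

variable {le ge : Set C}

/-- The retract-free triangulated closure of `S`. -/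
inductive GenW (S : Set C) : C → Prop
  | base {X : C} (hX : X ∈ S) : GenW S X
  | shift {X : C} (hX : GenW S X) : GenW S (X⟦(1 : ℤ)⟧)
  | unshift {X : C} (hX : GenW S X) : GenW S (X⟦(-1 : ℤ)⟧)
  | ext (T : Triangle C) (hT : T ∈ distTriang C) (h1 : GenW S T.obj₁)
      (h2 : GenW S T.obj₂) : GenW S T.obj₃

/-- The class of retracts of objects of `GenW S` is thick-triangulated-closed. -/
lemma retract_genW_closed (S : Set C) :
    ThickTriangClosed {M : C | ∃ N, GenW S N ∧ IsRetract M N} := by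
  refine ⟨?_, ?_, ?_, ?_⟩
  · rintro X Y ⟨N, hN, hR⟩ hXY
    exact ⟨N, hN, isRetract_trans hXY hR⟩
  · rintro X ⟨N, hN, hR⟩
    exact ⟨N⟦(1 : ℤ)⟧, GenW.shift hN, isRetract_shift _ hR⟩
  · rintro X ⟨N, hN, hR⟩
    exact ⟨N⟦(-1 : ℤ)⟧, GenW.unshift hN, isRetract_shift _ hR⟩
  · rintro Tr hTr ⟨N₁, hN₁, i₁, r₁, hir₁⟩ ⟨N₂, hN₂, i₂, r₂, hir₂⟩
    obtain ⟨N₃, g', h', hdN⟩ := distinguished_cocone_triangle (r₁ ≫ Tr.mor₁ ≫ i₂)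
    have hG : GenW S N₃ := GenW.ext _ hdN hN₁ hN₂
    obtain ⟨c, hc₁0, hc₂0⟩ : ∃ c : Tr.obj₃ ⟶ N₃, Tr.mor₂ ≫ c = i₂ ≫ g' ∧
        Tr.mor₃ ≫ i₁⟦(1 : ℤ)⟧' = c ≫ h' :=
      complete_distinguished_triangle_morphism Tr _ hTr hdN i₁ i₂
      (by
        show Tr.mor₁ ≫ i₂ = i₁ ≫ (r₁ ≫ Tr.mor₁ ≫ i₂)
        rw [← assoc, ← assoc, hir₁, id_comp])
    obtain ⟨c', hc'₁0, hc'₂0⟩ : ∃ c' : N₃ ⟶ Tr.obj₃, g' ≫ c' = r₂ ≫ Tr.mor₂ ∧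
        h' ≫ r₁⟦(1 : ℤ)⟧' = c' ≫ Tr.mor₃ :=
      complete_distinguished_triangle_morphism _ Tr hdN hTr r₁ r₂
      (by
        show (r₁ ≫ Tr.mor₁ ≫ i₂) ≫ r₂ = r₁ ≫ Tr.mor₁
        rw [assoc, assoc, hir₂, comp_id])
    have hc₁ : Tr.mor₂ ≫ c = i₂ ≫ g' := hc₁0
    have hc₂ : Tr.mor₃ ≫ i₁⟦(1 : ℤ)⟧' = c ≫ h' := hc₂0
    have hc'₁ : g' ≫ c' = r₂ ≫ Tr.mor₂ := hc'₁0
    have hc'₂ : h' ≫ r₁⟦(1 : ℤ)⟧' = c' ≫ Tr.mor₃ := hc'₂0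
    have hiso : IsIso (c ≫ c') := by
      exact isIso₃_of_isIso₁₂
        (show Tr ⟶ Tr from
          { hom₁ := 𝟙 _
            hom₂ := 𝟙 _
            hom₃ := c ≫ c'
            comm₁ := by simp
            comm₂ := by
              rw [← assoc, hc₁, assoc, hc'₁, ← assoc, hir₂, id_comp]
            comm₃ := by
              rw [assoc, ← hc'₂, ← assoc, ← hc₂, assoc, ← Functor.map_comp, hir₁] })
        hTr hTr inferInstance inferInstance
    exact ⟨N₃, hG, c, c' ≫ inv (c ≫ c'), by rw [← assoc, IsIso.hom_inv_id]⟩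

lemma exists_retract_genW (S : Set C) (hgen : thickClosure S = Set.univ) (M : C) :
    ∃ N, GenW S N ∧ IsRetract M N := by
  have hM : M ∈ thickClosure S := by rw [hgen]; trivial
  refine Set.mem_sInter.1 hM {M' : C | ∃ N, GenW S N ∧ IsRetract M' N} ⟨?_, retract_genW_closed S⟩
  intro Y hY
  exact ⟨Y, GenW.base hY, isRetract_refl Y⟩

lemma phiPos (w : IsWeightStructure C le ge) {S E : Set C}
    (hEr : ∀ ⦃P Q : C⦄, Q ∈ E → IsRetract P Q → P ∈ E)
    (hEe : ∀ Tr ∈ distTriang C, Tr.obj₁ ∈ E → Tr.obj₃ ∈ E → Tr.obj₂ ∈ E)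
    (hSle : S ⊆ le) (hSge : S ⊆ ge)
    (hSE : ∀ Y ∈ S, ∀ n : ℤ, 0 ≤ n → Y⟦n⟧ ∈ E)
    {N : C} (hN : GenW S N) : ∀ n : ℤ, PosDecomp le ge E (N⟦n⟧) := by
  induction hN with
  | @base Y hY =>
    intro n
    by_cases hn : 0 ≤ n
    · exact ⟨Y⟦n⟧, 0, 𝟙 _, 0, 0, hSE Y hY n hn, shift_mem_le w (hSle hY) n hn,
        w.ge_retract (hSge hY) (isRetract_zero Y), contractible_distinguished _⟩
    · refine ⟨0, Y⟦n⟧⟦(1 : ℤ)⟧, 0, 0, -((𝟙 (Y⟦n⟧))⟦(1 : ℤ)⟧'),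
        hEr (hSE Y hY 0 le_rfl) (isRetract_zero _),
        w.le_retract (hSle hY) (isRetract_zero Y),
        w.ge_retract (shift_mem_ge w (hSge hY) (n + 1) (by omega))
          (isRetract_of_iso (((shiftFunctorAdd' C n 1 (n + 1) rfl).app Y).symm)),
        rot_of_distTriang _ (contractible_distinguished (Y⟦n⟧))⟩
  | @shift X hX ih =>
    intro n
    exact posDecomp_of_iso (((shiftFunctorAdd' C 1 n (1 + n) rfl).app X).symm) (ih (1 + n))
  | @unshift X hX ih =>
    intro n
    exact posDecomp_of_iso (((shiftFunctorAdd' C (-1) n (-1 + n) rfl).app X).symm)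
      (ih (-1 + n))
  | @ext T hT h1 h2 ih1 ih2 =>
    intro n
    have hTr := rot_of_distTriang _ (Triangle.shift_distinguished T hT n)
    refine extPos w hEe hTr (ih2 n) ?_
    exact posDecomp_of_iso (((shiftFunctorAdd' C n 1 (n + 1) rfl).app T.obj₁).symm)
      (ih1 (n + 1))

lemma phiNeg (w : IsWeightStructure C le ge) {S E : Set C}
    (hEr : ∀ ⦃P Q : C⦄, Q ∈ E → IsRetract P Q → P ∈ E)
    (hEe : ∀ Tr ∈ distTriang C, Tr.obj₁ ∈ E → Tr.obj₃ ∈ E → Tr.obj₂ ∈ E)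
    (hSle : S ⊆ le) (hSge : S ⊆ ge)
    (hSE : ∀ Y ∈ S, ∀ n : ℤ, n ≤ 0 → Y⟦n⟧ ∈ E)
    {N : C} (hN : GenW S N) : ∀ n : ℤ, NegDecomp le ge E (N⟦n⟧) := by
  induction hN with
  | @base Y hY =>
    intro n
    by_cases hn : 0 ≤ n
    · exact ⟨Y⟦n⟧, 0, 𝟙 _, 0, 0, shift_mem_le w (hSle hY) n hn,
        hEr (hSE Y hY 0 le_rfl) (isRetract_zero _),
        w.ge_retract (hSge hY) (isRetract_zero Y), contractible_distinguished _⟩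
    · refine ⟨0, Y⟦n⟧⟦(1 : ℤ)⟧, 0, 0, -((𝟙 (Y⟦n⟧))⟦(1 : ℤ)⟧'),
        w.le_retract (hSle hY) (isRetract_zero Y),
        hEr (hSE Y hY (n + 1) (by omega))
          (isRetract_of_iso (((shiftFunctorAdd' C n 1 (n + 1) rfl).app Y).symm)),
        w.ge_retract (shift_mem_ge w (hSge hY) (n + 1) (by omega))
          (isRetract_of_iso (((shiftFunctorAdd' C n 1 (n + 1) rfl).app Y).symm)),
        rot_of_distTriang _ (contractible_distinguished (Y⟦n⟧))⟩
  | @shift X hX ih =>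
    intro n
    exact negDecomp_of_iso (((shiftFunctorAdd' C 1 n (1 + n) rfl).app X).symm) (ih (1 + n))
  | @unshift X hX ih =>
    intro n
    exact negDecomp_of_iso (((shiftFunctorAdd' C (-1) n (-1 + n) rfl).app X).symm)
      (ih (-1 + n))
  | @ext T hT h1 h2 ih1 ih2 =>
    intro n
    have hTr := rot_of_distTriang _ (Triangle.shift_distinguished T hT n)
    refine extNegFib w hEe hTr (negDecomp_fib w hEr (ih2 n)) (negDecomp_fib w hEr ?_)
    exact negDecomp_of_iso (((shiftFunctorAdd' C n 1 (n + 1) rfl).app T.obj₁).symm)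
      (ih1 (n + 1))

/-- If `M ∈ le` is a retract of `N` and `N` has a weight decomposition with `ge`-cone,
then `M` is a retract of the `le`-piece. -/
lemma retract_le_piece (w : IsWeightStructure C le ge) {M N A B : C} (hM : M ∈ le)
    (hR : IsRetract M N) {f : N ⟶ A} {g : A ⟶ B} {h : B ⟶ N⟦(1 : ℤ)⟧} (hB : B ∈ ge)
    (hd : Triangle.mk f g h ∈ distTriang C) : IsRetract M A := by
  obtain ⟨i, r, hir⟩ := hR
  obtain ⟨ρ, hρ⟩ : ∃ ρ : A ⟶ M, r = f ≫ ρ :=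
    Triangle.yoneda_exact₂ _ (inv_rot_of_distTriang _ hd) r (orth_negOne w hB hM _)
  exact ⟨i ≫ f, ρ, by rw [assoc, ← hρ, hir]⟩

/-- If `M ∈ ge` is a retract of `N`, a weight decomposition of `N⟦-1⟧` exhibits `M`
as a retract of the `ge`-piece. -/
lemma retract_ge_piece (w : IsWeightStructure C le ge) {M N A B : C} (hM : M ∈ ge)
    (hR : IsRetract M N) {f : N⟦(-1 : ℤ)⟧ ⟶ A} {g : A ⟶ B}
    {h : B ⟶ N⟦(-1 : ℤ)⟧⟦(1 : ℤ)⟧} (hA : A ∈ le)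
    (hd : Triangle.mk f g h ∈ distTriang C) : IsRetract M B := by
  obtain ⟨i, r, hir⟩ := hR
  have e := (shiftFunctorCompIsoId C (-1 : ℤ) (1 : ℤ) (by omega)).app N
  have hd2 := rot_of_distTriang _ (rot_of_distTriang _ hd)
  obtain ⟨i', hi'⟩ : ∃ i' : M ⟶ B, i ≫ e.inv = i' ≫ h :=
    Triangle.coyoneda_exact₂ _ hd2 (i ≫ e.inv) (by
      show (i ≫ e.inv) ≫ (-(f⟦(1 : ℤ)⟧')) = 0
      rw [Preadditive.comp_neg, w.orth hM hA ((i ≫ e.inv) ≫ f⟦(1 : ℤ)⟧'), neg_zero])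
  refine ⟨i', (h ≫ e.hom) ≫ r, ?_⟩
  rw [← assoc, ← assoc, ← hi', assoc, assoc, Iso.inv_hom_id_assoc, hir]

end Generation

end AuxWS

/-- For the weight structure `w` on the triangulated category `T` generated by a negative
subcategory `H` (with `H ⊆ T^{w=0}`; here the ambient category realizes `T`),
`T^{w≤0}` is the envelope of `∪_{i≥0} H[i]` and `T^{w≥0}` is the envelope of
`∪_{i≤0} H[i]`. -/
theorem weightStructure_of_negative_le_ge_description
    [IsIdempotentComplete C] (S : Set C)
    (hneg : ∀ X ∈ S, ∀ Y ∈ S, ∀ i : ℤ, 0 < i → ∀ f : X ⟶ Y⟦i⟧, f = 0)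
    (hgen : thickClosure S = Set.univ)
    (le ge : Set C) (w : IsWeightStructure C le ge) (hS : S ⊆ le ∩ ge) :
    le = envelope {X : C | ∃ Y ∈ S, ∃ i : ℤ, 0 ≤ i ∧ Nonempty (X ≅ Y⟦i⟧)} ∧
    ge = envelope {X : C | ∃ Y ∈ S, ∃ i : ℤ, i ≤ 0 ∧ Nonempty (X ≅ Y⟦i⟧)} := by
  have hSle : S ⊆ le := fun Y hY => (hS hY).1
  have hSge : S ⊆ ge := fun Y hY => (hS hY).2
  have hEnvP := envClosed_envelope {X : C | ∃ Y ∈ S, ∃ i : ℤ, 0 ≤ i ∧ Nonempty (X ≅ Y⟦i⟧)}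
  have hEnvM := envClosed_envelope {X : C | ∃ Y ∈ S, ∃ i : ℤ, i ≤ 0 ∧ Nonempty (X ≅ Y⟦i⟧)}
  constructor
  · refine Set.Subset.antisymm ?_ ?_
    · intro M hM
      obtain ⟨N, hN, hR⟩ := exists_retract_genW S hgen M
      obtain ⟨A, B, f, g, h, hAE, hAle, hBge, hd⟩ :=
        phiPos w hEnvP.1 hEnvP.2 hSle hSge
          (fun Y hY n hn =>
            subset_envelope _ ⟨Y, hY, n, hn, ⟨Iso.refl _⟩⟩) hN 0
      have hR0 : IsRetract M (N⟦(0 : ℤ)⟧) :=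
        isRetract_trans hR (isRetract_of_iso ((shiftFunctorZero C ℤ).app N).symm)
      exact hEnvP.1 hAE (retract_le_piece w hM hR0 hBge hd)
    · refine envelope_subset ?_ ⟨w.le_retract, fun Tr hTr h1 h3 => le_ext w hTr h1 h3⟩
      rintro X ⟨Y, hY, i, hi, ⟨e⟩⟩
      exact w.le_retract (shift_mem_le w (hSle hY) i hi) (isRetract_of_iso e)
  · refine Set.Subset.antisymm ?_ ?_
    · intro M hM
      obtain ⟨N, hN, hR⟩ := exists_retract_genW S hgen M
      obtain ⟨A, B, f, g, h, hAle, hBE, hBge, hd⟩ :=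
        phiNeg w hEnvM.1 hEnvM.2 hSle hSge
          (fun Y hY n hn =>
            subset_envelope _ ⟨Y, hY, n, hn, ⟨Iso.refl _⟩⟩) hN (-1)
      exact hEnvM.1 hBE (retract_ge_piece w hM hR hAle hd)
    · refine envelope_subset ?_ ⟨w.ge_retract, fun Tr hTr h1 h3 => ge_ext w hTr h1 h3⟩
      rintro X ⟨Y, hY, i, hi, ⟨e⟩⟩
      exact w.ge_retract (shift_mem_ge w (hSge hY) i hi) (isRetract_of_iso e)
end

section
/- Let C, C' be triangulated categories each equipped with a weight structure (w, w') and an adjacent t-structure (t, t'), and let F : C → C' be exact with right adjoint G : C' → C. Then F is left (resp. right) weight-exact with respect to w, w' if and only if G is left (resp. right) t-exact with respect to t', t. -/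
open CategoryTheory Category Limits Pretriangulated

/-- A t-structure on a triangulated category `C`, given by the classes
`le = C^{t≤0}` and `ge = C^{t≥0}`. -/
structure IsTStructure (C : Type*) [Category C] [HasZeroObject C] [HasShift C ℤ]
    [Preadditive C] [∀ n : ℤ, (shiftFunctor C n).Additive] [Pretriangulated C]
    (le ge : Set C) : Prop where
  le_iso : ∀ ⦃X Y : C⦄, Y ∈ le → Nonempty (X ≅ Y) → X ∈ le
  ge_iso : ∀ ⦃X Y : C⦄, Y ∈ ge → Nonempty (X ≅ Y) → X ∈ ge
  le_shift : ∀ ⦃X : C⦄, X ∈ le → X⟦(1 : ℤ)⟧ ∈ le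
  ge_shift : ∀ ⦃X : C⦄, X ∈ ge → X⟦(-1 : ℤ)⟧ ∈ ge
  orth : ∀ ⦃X Y : C⦄, X ∈ le → Y⟦(1 : ℤ)⟧ ∈ ge → ∀ f : X ⟶ Y, f = 0
  decomp : ∀ M : C, ∃ (A B : C) (_ : A ∈ le) (_ : B⟦(1 : ℤ)⟧ ∈ ge)
    (f : A ⟶ M) (g : M ⟶ B) (h : B ⟶ A⟦(1 : ℤ)⟧), Triangle.mk f g h ∈ distTriang C
variable {C : Type*} [Category C] [HasZeroObject C] [HasShift C ℤ]
  [Preadditive C] [∀ n : ℤ, (shiftFunctor C n).Additive] [Pretriangulated C]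
variable {C' : Type*} [Category C'] [HasZeroObject C'] [HasShift C' ℤ]
  [Preadditive C'] [∀ n : ℤ, (shiftFunctor C' n).Additive] [Pretriangulated C']

section Aux

/-- Retracts transfer along isomorphisms. -/
lemma IsRetract.of_iso {D : Type*} [Category D] {X Y X' Y' : D} (h : IsRetract X Y)
    (eX : X' ≅ X) (eY : Y ≅ Y') : IsRetract X' Y' := by
  obtain ⟨i, r, hir⟩ := h
  exact ⟨eX.hom ≫ i ≫ eY.hom, eY.inv ≫ r ≫ eX.inv, by
    simp only [Category.assoc, Iso.hom_inv_id_assoc]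
    rw [reassoc_of% hir, eX.hom_inv_id]⟩

/-- Criterion for membership in `C^{t≤0}`. -/
lemma IsTStructure.mem_le_of_orth {tle tge : Set C} (t : IsTStructure C tle tge) {Z : C}
    (hZ : ∀ Y : C, Y⟦(1 : ℤ)⟧ ∈ tge → ∀ f : Z ⟶ Y, f = 0) : Z ∈ tle := by
  obtain ⟨A, B, hA, hB, f, g, h, hT⟩ := t.decomp Z
  have hg : g = 0 := hZ B hB g
  obtain ⟨ψ, hψ⟩ := Triangle.yoneda_exact₃ _ hT (𝟙 B)
    (by change g ≫ 𝟙 B = 0; rw [hg, zero_comp])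
  have hψ0 : ψ = 0 := t.orth (t.le_shift hA) hB ψ
  have hB0 : IsZero B := by
    rw [IsZero.iff_id_eq_zero, hψ, hψ0, comp_zero]; rfl
  have : IsIso (Triangle.mk f g h).mor₁ :=
    (Triangle.isZero₃_iff_isIso₁ _ hT).1 hB0
  exact t.le_iso hA ⟨(asIso (Triangle.mk f g h).mor₁).symm⟩

/-- Criterion for membership in `C^{t≥0}`. -/
lemma IsTStructure.mem_ge_of_orth {tle tge : Set C} (t : IsTStructure C tle tge) {Z : C}
    (hZ : ∀ X ∈ tle, ∀ f : X ⟶ Z⟦(-1 : ℤ)⟧, f = 0) : Z ∈ tge := by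
  obtain ⟨A, B, hA, hB, f, g, h, hT⟩ := t.decomp (Z⟦(-1 : ℤ)⟧)
  have hf : f = 0 := hZ A hA f
  set T3 := (Triangle.mk f g h).rotate.rotate.rotate with hT3def
  have hT3 : T3 ∈ distTriang C :=
    rot_of_distTriang _ (rot_of_distTriang _ (rot_of_distTriang _ hT))
  have hm : T3.mor₁ = 0 := by
    show -(f⟦(1 : ℤ)⟧') = 0
    rw [hf, Functor.map_zero, neg_zero]
  obtain ⟨ψ, hψ⟩ := Triangle.coyoneda_exact₂ _ (inv_rot_of_distTriang _ hT3) (𝟙 T3.obj₁)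
    (by show 𝟙 T3.obj₁ ≫ T3.mor₁ = 0; rw [hm, comp_zero])
  have hψ0 : ψ = 0 := by
    refine t.orth (t.le_shift hA) ?_ ψ
    exact t.ge_iso hB
      ⟨(shiftFunctorCompIsoId C (-1 : ℤ) (1 : ℤ) (neg_add_cancel 1)).app (B⟦(1 : ℤ)⟧)⟩
  have hzero : IsZero T3.obj₁ := by
    rw [IsZero.iff_id_eq_zero, hψ, hψ0, zero_comp]; rfl
  have : IsIso T3.mor₂ := (Triangle.isZero₁_iff_isIso₂ _ hT3).1 hzero
  refine t.ge_iso hB ⟨?_⟩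
  exact ((shiftFunctorCompIsoId C (-1 : ℤ) (1 : ℤ) (neg_add_cancel 1)).app Z).symm ≪≫
    @asIso _ _ _ _ T3.mor₂ this

/-- Criterion for membership in `C^{w≤0}`. -/
lemma IsWeightStructure.mem_le_of_orth {wle wge : Set C} (w : IsWeightStructure C wle wge)
    {Z : C} (hZ : ∀ X ∈ wge, ∀ f : X ⟶ Z⟦(1 : ℤ)⟧, f = 0) : Z ∈ wle := by
  obtain ⟨A, B, hA, hB, f, g, h, hT⟩ := w.decomp Z
  have hh : h = 0 := hZ B hB h
  obtain ⟨ψ, hψ⟩ := Triangle.yoneda_exact₂ _ (inv_rot_of_distTriang _ hT) (𝟙 Z)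
    (by
      show (-(h⟦(-1 : ℤ)⟧') ≫ (shiftFunctorCompIsoId C (1 : ℤ) (-1) (add_neg_cancel 1)).hom.app Z) ≫ 𝟙 Z = 0
      rw [hh]; simp)
  exact w.le_retract hA ⟨f, ψ, hψ.symm⟩

/-- Criterion for membership in `C^{w≥0}`. -/
lemma IsWeightStructure.mem_ge_of_orth {wle wge : Set C} (w : IsWeightStructure C wle wge)
    {Z : C} (hZ : ∀ Y ∈ wle, ∀ f : Z ⟶ Y⟦(1 : ℤ)⟧, f = 0) : Z ∈ wge := by
  obtain ⟨A, B, hA, hB, f, g, h, hT⟩ := w.decomp (Z⟦(-1 : ℤ)⟧)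
  set e := (shiftFunctorCompIsoId C (-1 : ℤ) (1 : ℤ) (neg_add_cancel 1)).app Z with hedef
  set T3 := (Triangle.mk f g h).rotate.rotate.rotate with hT3def
  have hT3 : T3 ∈ distTriang C :=
    rot_of_distTriang _ (rot_of_distTriang _ (rot_of_distTriang _ hT))
  have hm : T3.mor₁ = 0 := by
    have h0 : e.inv ≫ T3.mor₁ = 0 := hZ A hA _
    exact (cancel_epi e.inv).1 (h0.trans comp_zero.symm)
  obtain ⟨ψ, hψ⟩ := Triangle.coyoneda_exact₂ _ (inv_rot_of_distTriang _ hT3) (𝟙 T3.obj₁)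
    (by show 𝟙 T3.obj₁ ≫ T3.mor₁ = 0; rw [hm, comp_zero])
  have hret : IsRetract T3.obj₁ T3.invRotate.obj₁ := ⟨ψ, T3.invRotate.mor₁, hψ.symm⟩
  refine w.ge_retract hB (hret.of_iso ?_ ?_)
  · exact (show (Z⟦(-1 : ℤ)⟧)⟦(1 : ℤ)⟧ ≅ Z from e).symm
  · exact show ((B⟦(1 : ℤ)⟧)⟦(-1 : ℤ)⟧ : C) ≅ B from
      (shiftFunctorCompIsoId C (1 : ℤ) (-1 : ℤ) (add_neg_cancel 1)).app B

end Aux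

/-- Let `C`, `C'` carry weight structures `w`, `w'` with adjacent t-structures `t`,
`t'` (i.e. `C^{w≤0} = C^{t≤0}` and `C'^{w'≤0} = C'^{t'≤0}`), and `F : C ⥤ C'` an exact
functor with right adjoint `G`. Then `F` is left (resp. right) weight-exact iff `G` is
left (resp. right) t-exact, where `G` is left t-exact if it maps `C'^{t'≥0}` into
`C^{t≥0}`, and right t-exact if it maps `C'^{t'≤0}` into `C^{t≤0}`. -/
theorem weightExact_iff_adjoint_tExact
    (wle wge tle tge : Set C) (wle' wge' tle' tge' : Set C')
    (w : IsWeightStructure C wle wge) (t : IsTStructure C tle tge)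
    (w' : IsWeightStructure C' wle' wge') (t' : IsTStructure C' tle' tge')
    (adj₁ : wle = tle) (adj₂ : wle' = tle')
    (F : C ⥤ C') (G : C' ⥤ C) [F.CommShift ℤ] [F.IsTriangulated]
    [G.CommShift ℤ] [G.IsTriangulated] (adj : F ⊣ G) :
    ((∀ X ∈ wle, F.obj X ∈ wle') ↔ (∀ Y ∈ tge', G.obj Y ∈ tge)) ∧
    ((∀ X ∈ wge, F.obj X ∈ wge') ↔ (∀ Y ∈ tle', G.obj Y ∈ tle)) := by
  constructor
  · constructor
    · intro hF Y hY
      refine t.mem_ge_of_orth (fun X hX f => ?_)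
      set e := (G.commShiftIso (-1 : ℤ)).app Y with hedef
      have h1 : (adj.homEquiv X (Y⟦(-1 : ℤ)⟧)).symm (f ≫ e.inv) = 0 := by
        refine t'.orth ?_ ?_ _
        · rw [← adj₂]
          exact hF X (by rw [adj₁]; exact hX)
        · exact t'.ge_iso hY
            ⟨(shiftFunctorCompIsoId C' (-1 : ℤ) (1 : ℤ) (neg_add_cancel 1)).app Y⟩
      have h2 : f ≫ e.inv = 0 := by
        have := congrArg (adj.homEquiv X (Y⟦(-1 : ℤ)⟧)) h1
        rw [Equiv.apply_symm_apply, Adjunction.homEquiv_unit, G.map_zero, comp_zero] at this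
        exact this
      calc f = (f ≫ e.inv) ≫ e.hom := by
              rw [assoc, e.inv_hom_id]; exact (comp_id f).symm
      _ = 0 := by rw [h2, zero_comp]
    · intro hG X hX
      rw [adj₂]
      refine t'.mem_le_of_orth (fun Y hY f => ?_)
      have h1 : adj.homEquiv X Y f = 0 := by
        refine t.orth (by rw [← adj₁]; exact hX) ?_ _
        exact t.ge_iso (hG _ hY) ⟨((G.commShiftIso (1 : ℤ)).app Y).symm⟩
      have := congrArg (adj.homEquiv X Y).symm h1
      rw [Equiv.symm_apply_apply, Adjunction.homEquiv_counit, F.map_zero, zero_comp] at this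
      exact this
  · constructor
    · intro hF Y hY
      rw [← adj₁]
      refine w.mem_le_of_orth (fun X hX f => ?_)
      set e := (G.commShiftIso (1 : ℤ)).app Y with hedef
      have h1 : (adj.homEquiv X (Y⟦(1 : ℤ)⟧)).symm (f ≫ e.inv) = 0 := by
        refine w'.orth (hF X hX) (by rw [adj₂]; exact hY) _
      have h2 : f ≫ e.inv = 0 := by
        have := congrArg (adj.homEquiv X (Y⟦(1 : ℤ)⟧)) h1
        rw [Equiv.apply_symm_apply, Adjunction.homEquiv_unit, G.map_zero, comp_zero] at this
        exact this
      calc f = (f ≫ e.inv) ≫ e.hom := by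
              rw [assoc, e.inv_hom_id]; exact (comp_id f).symm
      _ = 0 := by rw [h2, zero_comp]
    · intro hG X hX
      refine w'.mem_ge_of_orth (fun Y hY f => ?_)
      set e := (G.commShiftIso (1 : ℤ)).app Y with hedef
      have h1 : adj.homEquiv X (Y⟦(1 : ℤ)⟧) f ≫ e.hom = 0 := by
        refine w.orth hX ?_ _
        rw [adj₁]
        exact hG Y (by rw [← adj₂]; exact hY)
      have h2 : adj.homEquiv X (Y⟦(1 : ℤ)⟧) f = 0 := by
        calc adj.homEquiv X (Y⟦(1 : ℤ)⟧) f
            = (adj.homEquiv X (Y⟦(1 : ℤ)⟧) f ≫ e.hom) ≫ e.inv := by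
              rw [assoc, e.hom_inv_id]; exact (comp_id _).symm
        _ = 0 := by rw [h1, zero_comp]
      have := congrArg (adj.homEquiv X (Y⟦(1 : ℤ)⟧)).symm h2
      rw [Equiv.symm_apply_apply, Adjunction.homEquiv_counit, F.map_zero, zero_comp] at this
      exact this
end
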